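/- Suppose x̂ minimizes x ↦ ∑_{j=1}^T λ_j g^{(j)}(x) over a convex set C, where λ_1 ≥ ... ≥ λ_T ≥ 0 with λ_{T+1} = 0, and suppose λ_j − λ_{j+1} > 0 for some fixed j. Then there exists a tolerance vector ε ∈ ℝ^T such that x̂ is an optimal solution of the ε-constraint problem: minimize G^(j)(x) subject to G^(t)(x) ≤ ε_t for all t ≠ j and x ∈ C. (One may take ε_t = G^(t)(x̂).) -/

import Mathlib

noncomputable def sortAsc {T : ℕ} (v : Fin T → ℝ) : List ℝ :=
  Multiset.sort (Multiset.map v Finset.univ.val) (· ≤ ·)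

noncomputable def sumSmallest {T : ℕ} (v : Fin T → ℝ) (j : ℕ) : ℝ :=
  ∑ i ∈ Finset.range j, (sortAsc v).getD i 0

noncomputable def cvar {T : ℕ} (v : Fin T → ℝ) (j : ℕ) : ℝ :=
  -(1 / (j : ℝ)) * sumSmallest v j

noncomputable def topSum {T : ℕ} (v : Fin T → ℝ) (t : ℕ) : ℝ :=
  ∑ i ∈ Finset.range t, (sortAsc v).reverse.getD i 0

noncomputable def nthLargest {T : ℕ} (v : Fin T → ℝ) (j : ℕ) : ℝ :=
  (sortAsc v).reverse.getD (j - 1) 0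


lemma abel_sum (T : ℕ) (lam a : ℕ → ℝ) :
    ∑ t ∈ Finset.Icc 1 T, (lam t - lam (t+1)) * (∑ j' ∈ Finset.Icc 1 t, a j')
      = (∑ j' ∈ Finset.Icc 1 T, lam j' * a j')
        - lam (T+1) * (∑ j' ∈ Finset.Icc 1 T, a j') := by
  induction T with
  | zero => simp
  | succ T ih =>
    rw [Finset.sum_Icc_succ_top (by omega : 1 ≤ T+1),
        Finset.sum_Icc_succ_top (by omega : 1 ≤ T+1), ih,
        Finset.sum_Icc_succ_top (by omega : 1 ≤ T+1)]
    ring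

lemma topSum_eq {T : ℕ} (v : Fin T → ℝ) (t : ℕ) :
    topSum v t = ∑ j' ∈ Finset.Icc 1 t, nthLargest v j' := by
  induction t with
  | zero => simp [topSum]
  | succ t ih =>
    rw [Finset.sum_Icc_succ_top (by omega : 1 ≤ t+1), ← ih]
    simp [topSum, Finset.sum_range_succ, nthLargest]

/-- If `x̂` minimizes the OWA objective over convex `C` and `λ_j - λ_{j+1} > 0`,
then there is a tolerance vector `ε` for which `x̂` is optimal for the
ε-constraint problem: minimize `G^(j)` subject to `G^(t) ≤ ε_t` for `t ≠ j`. -/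
theorem stmt_6 {n T : ℕ} (C : Set (Fin n → ℝ)) (hC : Convex ℝ C)
    (g : Fin T → (Fin n → ℝ) → ℝ) (hg : ∀ i, ConvexOn ℝ C (g i))
    (lam : ℕ → ℝ)
    (hlam : ∀ j, 1 ≤ j → j ≤ T → lam (j + 1) ≤ lam j)
    (hlamnn : ∀ j, 1 ≤ j → j ≤ T → 0 ≤ lam j)
    (hlamT : lam (T + 1) = 0)
    (j : ℕ) (hj1 : 1 ≤ j) (hjT : j ≤ T) (hjpos : 0 < lam j - lam (j + 1))
    (xhat : Fin n → ℝ) (hxhat : xhat ∈ C)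
    (hopt : ∀ x ∈ C,
      ∑ j' ∈ Finset.Icc 1 T, lam j' * nthLargest (fun i => g i xhat) j'
        ≤ ∑ j' ∈ Finset.Icc 1 T, lam j' * nthLargest (fun i => g i x) j') :
    ∃ ε : ℕ → ℝ,
      (∀ t, 1 ≤ t → t ≤ T → t ≠ j → topSum (fun i => g i xhat) t ≤ ε t) ∧
      (∀ x ∈ C, (∀ t, 1 ≤ t → t ≤ T → t ≠ j → topSum (fun i => g i x) t ≤ ε t) →
        topSum (fun i => g i xhat) j ≤ topSum (fun i => g i x) j) := by
  refine ⟨fun t => topSum (fun i => g i xhat) t, fun t _ _ _ => le_rfl, ?_⟩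
  intro x hx hfeas
  have key : ∀ v : Fin T → ℝ,
      ∑ t ∈ Finset.Icc 1 T, (lam t - lam (t+1)) * topSum v t
        = ∑ j' ∈ Finset.Icc 1 T, lam j' * nthLargest v j' := by
    intro v
    simp only [topSum_eq]
    rw [abel_sum, hlamT]
    ring
  have H := hopt x hx
  rw [← key (fun i => g i xhat), ← key (fun i => g i x)] at H
  have hjmem : j ∈ Finset.Icc 1 T := Finset.mem_Icc.mpr ⟨hj1, hjT⟩
  rw [← Finset.sum_erase_add _ _ hjmem, ← Finset.sum_erase_add _ _ hjmem] at H
  have herase : ∑ t ∈ (Finset.Icc 1 T).erase j,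
        (lam t - lam (t+1)) * topSum (fun i => g i x) t
      ≤ ∑ t ∈ (Finset.Icc 1 T).erase j,
        (lam t - lam (t+1)) * topSum (fun i => g i xhat) t := by
    apply Finset.sum_le_sum
    intro t ht
    have ht' := Finset.mem_erase.mp ht
    have htI := Finset.mem_Icc.mp ht'.2
    have hA : 0 ≤ lam t - lam (t+1) := by
      have := hlam t htI.1 htI.2; linarith
    exact mul_le_mul_of_nonneg_left (hfeas t htI.1 htI.2 ht'.1) hA
  have hfin : (lam j - lam (j+1)) * topSum (fun i => g i xhat) j
      ≤ (lam j - lam (j+1)) * topSum (fun i => g i x) j := by linarith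
  exact le_of_mul_le_mul_left hfin hjpos
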